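/- For any quantum relative entropy 𝐃 and any three density matrices ρ, σ, ω on ℂ^d, the triangle-type inequality 𝐃(ρ∥σ) ≤ 𝐃(ρ∥ω) + D_max(ω∥σ) holds (with the convention ±∞ ≤ +∞). -/

import Mathlib

open scoped ENNReal Kronecker ComplexOrder Matrix
open Classical

/-- A density matrix: positive semidefinite with unit trace. -/
def IsDensity {n : Type} [Fintype n] (ρ : Matrix n n ℂ) : Prop :=
  ρ.PosSemidef ∧ ρ.trace = 1

/-- The extension `id_m ⊗ Φ` of a map `Φ` on matrices, acting blockwise. -/
def cpExt {a b : Type} (Φ : Matrix a a ℂ → Matrix b b ℂ) (m : Type)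
    (M : Matrix (m × a) (m × a) ℂ) : Matrix (m × b) (m × b) ℂ :=
  Matrix.of fun p q => Φ (Matrix.of fun k l => M (p.1, k) (q.1, l)) p.2 q.2

/-- A map on matrices is completely positive if every extension `id_m ⊗ Φ`
preserves positive semidefiniteness. -/
def IsCP {a b : Type} [Fintype a] [Fintype b] (Φ : Matrix a a ℂ → Matrix b b ℂ) : Prop :=
  ∀ (m : Type) [Fintype m] (M : Matrix (m × a) (m × a) ℂ),
    M.PosSemidef → (cpExt Φ m M).PosSemidef

/-- A quantum channel: a linear, completely positive, trace-preserving map. -/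
def IsCPTP {a b : Type} [Fintype a] [Fintype b] (Φ : Matrix a a ℂ → Matrix b b ℂ) : Prop :=
  (∀ (c : ℂ) (A B : Matrix a a ℂ), Φ (c • A + B) = c • Φ A + Φ B) ∧
    IsCP Φ ∧ ∀ A : Matrix a a ℂ, (Φ A).trace = A.trace

/-- The projector onto the support of a Hermitian matrix. -/
noncomputable def suppProj {n : Type} [Fintype n] [DecidableEq n]
    (ρ : Matrix n n ℂ) : Matrix n n ℂ :=
  if h : ρ.IsHermitian then
    (h.eigenvectorUnitary : Matrix n n ℂ) *
      Matrix.diagonal (fun i => if h.eigenvalues i = 0 then (0 : ℂ) else 1) *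
      (h.eigenvectorUnitary : Matrix n n ℂ)ᴴ
  else 0

/-- The min relative entropy `D_min(ρ‖σ) = -log₂ Tr[Π_ρ σ]` (with value `+∞` if
`Tr[Π_ρ σ] = 0`, i.e. if `ρ ⊥ σ`). -/
noncomputable def Dmin {n : Type} [Fintype n] [DecidableEq n]
    (ρ σ : Matrix n n ℂ) : ℝ≥0∞ :=
  if ((suppProj ρ * σ).trace.re) = 0 then ∞
  else ENNReal.ofReal (- Real.logb 2 ((suppProj ρ * σ).trace.re))

/-- The max relative entropy `D_max(ρ‖σ) = log₂ min {t : tσ ≥ ρ}` (with value `+∞`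
if no such `t` exists, i.e. if `supp ρ ⊄ supp σ`). -/
noncomputable def Dmax {n : Type} [Fintype n]
    (ρ σ : Matrix n n ℂ) : ℝ≥0∞ :=
  if ∃ t : ℝ, ((t : ℂ) • σ - ρ).PosSemidef then
    ENNReal.ofReal (Real.logb 2 (sInf {t : ℝ | ((t : ℂ) • σ - ρ).PosSemidef}))
  else ∞

namespace Stmt7Aux

open Matrix

/-! ### Positive semidefinite helper lemmas -/

lemma kron_psd {a b : Type} [Fintype a] [Fintype b]
    {A : Matrix a a ℂ} {B : Matrix b b ℂ} (hA : A.PosSemidef) (hB : B.PosSemidef) :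
    (A ⊗ₖ B).PosSemidef := by
  exact hA.kronecker hB

lemma smul_psd {a : Type} [Fintype a] {c : ℝ} (hc : 0 ≤ c)
    {B : Matrix a a ℂ} (hB : B.PosSemidef) : ((c : ℂ) • B).PosSemidef := by
  rw [Matrix.posSemidef_iff_dotProduct_mulVec]
  constructor
  · unfold Matrix.IsHermitian
    rw [Matrix.conjTranspose_smul, hB.1.eq]
    simp [Complex.conj_ofReal]
  · intro x
    rw [Matrix.smul_mulVec, dotProduct_smul]
    exact smul_nonneg (by exact_mod_cast hc) (hB.dotProduct_mulVec_nonneg x)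

lemma trace_nonneg' {A : Type} [Fintype A] {B : Matrix A A ℂ} (hB : B.PosSemidef) :
    0 ≤ B.trace := by
  classical
  refine Finset.sum_nonneg fun i _ => ?_
  have := hB.dotProduct_mulVec_nonneg (Pi.single i 1)
  simpa [Matrix.mulVec_single, dotProduct, Pi.single_apply] using this

lemma sub_kron {l m n p : Type} (A B : Matrix l m ℂ) (C : Matrix n p ℂ) :
    (A - B) ⊗ₖ C = A ⊗ₖ C - B ⊗ₖ C := by
  ext x y
  simp [Matrix.kroneckerMap_apply, sub_mul]

lemma kron_sub {l m n p : Type} (A : Matrix l m ℂ) (B C : Matrix n p ℂ) :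
    A ⊗ₖ (B - C) = A ⊗ₖ B - A ⊗ₖ C := by
  ext x y
  simp [Matrix.kroneckerMap_apply, mul_sub]

lemma kron_mono {a b : Type} [Fintype a] [Fintype b]
    {A B : Matrix a a ℂ} {C D : Matrix b b ℂ}
    (hAB : (A - B).PosSemidef) (hB : B.PosSemidef)
    (hCD : (C - D).PosSemidef) (hC : C.PosSemidef) :
    (A ⊗ₖ C - B ⊗ₖ D).PosSemidef := by
  have h : A ⊗ₖ C - B ⊗ₖ D = (A - B) ⊗ₖ C + B ⊗ₖ (C - D) := by
    rw [sub_kron, kron_sub]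
    abel
  rw [h]
  exact (kron_psd hAB hC).add (kron_psd hB hCD)

lemma psd_sum {ι A : Type} [Fintype A] (s : Finset ι) (f : ι → Matrix A A ℂ)
    (h : ∀ i ∈ s, (f i).PosSemidef) : (∑ i ∈ s, f i).PosSemidef :=
  Finset.sum_induction f Matrix.PosSemidef (fun _ _ ha hb => ha.add hb) Matrix.PosSemidef.zero h

lemma kron_density {a b : Type} [Fintype a] [Fintype b]
    {A : Matrix a a ℂ} {B : Matrix b b ℂ} (hA : IsDensity A) (hB : IsDensity B) :
    IsDensity (A ⊗ₖ B) :=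
  ⟨kron_psd hA.1 hB.1, by rw [Matrix.trace_kronecker, hA.2, hB.2, mul_one]⟩

/-! ### Iterated Kronecker powers -/

abbrev It (α : Type) : ℕ → Type
  | 0 => α
  | n+1 => α × It α n

instance itFintype (α : Type) [Fintype α] : ∀ n, Fintype (It α n)
  | 0 => inferInstanceAs (Fintype α)
  | n+1 => @instFintypeProd α (It α n) _ (itFintype α n)

instance itDecEq (α : Type) [DecidableEq α] : ∀ n, DecidableEq (It α n)
  | 0 => inferInstanceAs (DecidableEq α)
  | n+1 => @instDecidableEqProd α (It α n) _ (itDecEq α n)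

def pw {α : Type} (A : Matrix α α ℂ) : (n : ℕ) → Matrix (It α n) (It α n) ℂ
  | 0 => A
  | n+1 => A ⊗ₖ pw A n

lemma pw_psd {α : Type} [Fintype α] {A : Matrix α α ℂ} (hA : A.PosSemidef) :
    ∀ n, (pw A n).PosSemidef
  | 0 => hA
  | n+1 => kron_psd hA (pw_psd hA n)

lemma pw_density {α : Type} [Fintype α] {A : Matrix α α ℂ} (hA : IsDensity A) :
    ∀ n, IsDensity (pw A n)
  | 0 => hA
  | n+1 => kron_density hA (pw_density hA n)

lemma pw_le {α : Type} [Fintype α] {S W : Matrix α α ℂ} {c : ℝ} (hc : 0 ≤ c)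
    (hW : W.PosSemidef) (hS : S.PosSemidef) (h : (S - (c : ℂ) • W).PosSemidef) :
    ∀ n, (pw S n - ((c ^ (n+1) : ℝ) : ℂ) • pw W n).PosSemidef
  | 0 => by simpa [pw] using h
  | n+1 => by
    have key : ((c ^ (n+2) : ℝ) : ℂ) • pw W (n+1)
        = ((c:ℂ) • W) ⊗ₖ (((c ^ (n+1) : ℝ) : ℂ) • pw W n) := by
      show _ = ((c:ℂ) • W) ⊗ₖ (((c ^ (n+1) : ℝ) : ℂ) • pw W n)
      rw [Matrix.smul_kronecker, Matrix.kronecker_smul, smul_smul]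
      show ((c ^ (n+2) : ℝ) : ℂ) • (W ⊗ₖ pw W n) = _
      norm_cast
      ring_nf
    show (S ⊗ₖ pw S n - ((c ^ (n+2) : ℝ) : ℂ) • pw W (n+1)).PosSemidef
    rw [key]
    exact kron_mono h (smul_psd hc hW) (pw_le hc hW hS h n) (pw_psd hS n)

/-! ### Flag states -/

def zf : ∀ k, It (Fin 2) k
  | 0 => 0
  | k+1 => (0, zf k)

noncomputable def matE : Matrix (Fin 2) (Fin 2) ℂ := Matrix.diagonal ![1, 0]
noncomputable def matU : Matrix (Fin 2) (Fin 2) ℂ := Matrix.diagonal ![1/2, 1/2]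

lemma matE_apply (i j : Fin 2) : matE i j = if i = 0 ∧ j = 0 then 1 else 0 := by
  fin_cases i <;> fin_cases j <;> simp [matE, Matrix.diagonal]

lemma matU_eq : matU = ((2 : ℝ)⁻¹ : ℂ) • 1 := by
  ext i j
  fin_cases i <;> fin_cases j <;> simp [matU, Matrix.diagonal, Matrix.one_apply] <;> norm_num

lemma matE_density : IsDensity matE := by
  constructor
  · refine Matrix.PosSemidef.diagonal fun i => ?_
    fin_cases i <;> norm_num
  · simp [matE, Matrix.trace_diagonal, Fin.sum_univ_two]

lemma matU_density : IsDensity matU := by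
  constructor
  · refine Matrix.PosSemidef.diagonal fun i => ?_
    have h : (0:ℂ) ≤ 1/2 := by
      rw [Complex.le_def]
      constructor <;> norm_num
    fin_cases i <;> simpa using h
  · simp [matU, Matrix.trace_diagonal, Fin.sum_univ_two]
    norm_num

lemma pwE_apply : ∀ k (p q : It (Fin 2) k),
    pw matE k p q = if p = zf k ∧ q = zf k then 1 else 0
  | 0, p, q => by
    rw [show pw matE 0 p q = matE p q from rfl, matE_apply]
    rfl
  | k+1, (a, b), (c, d) => by
    show matE a c * pw matE k b d = _
    rw [matE_apply, pwE_apply k b d]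
    show _ = if (a, b) = (0, zf k) ∧ (c, d) = (0, zf k) then 1 else 0
    by_cases h1 : a = 0 <;> by_cases h2 : c = 0 <;> by_cases h3 : b = zf k <;>
      by_cases h4 : d = zf k <;> simp [h1, h2, h3, h4, Prod.ext_iff]

lemma pwU_eq : ∀ k, pw matU k = (((2 : ℝ)⁻¹ ^ (k+1) : ℝ) : ℂ) • 1
  | 0 => by
    show matU = _
    rw [matU_eq]
    norm_num
  | k+1 => by
    show matU ⊗ₖ pw matU k = _
    rw [pwU_eq k, matU_eq, Matrix.smul_kronecker, Matrix.kronecker_smul, smul_smul,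
      Matrix.one_kronecker_one]
    show ((((2:ℝ)⁻¹ : ℂ)) * (((2 : ℝ)⁻¹ ^ (k+1) : ℝ) : ℂ)) • _ = _
    norm_cast
    rw [show (2:ℝ)⁻¹ * (2:ℝ)⁻¹ ^ (k+1) = (2:ℝ)⁻¹ ^ (k+2) by ring]

lemma itCard : ∀ k, Fintype.card (It (Fin 2) k) = 2 ^ (k+1)
  | 0 => rfl
  | k+1 => by
    show Fintype.card (Fin 2 × It (Fin 2) k) = _
    rw [Fintype.card_prod, itCard k]
    simp [pow_succ]
    ring

/-! ### The conditional-erasure channel -/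

variable {A F : Type} [Fintype A] [Fintype F] [DecidableEq F]

/-- Keep the `z`-flag block, replace everything else by `τ`. -/
noncomputable def chan (τ : Matrix A A ℂ) (z : F)
    (M : Matrix (A × F) (A × F) ℂ) : Matrix A A ℂ :=
  M.submatrix (fun k => (k, z)) (fun l => (l, z)) +
    (∑ y ∈ Finset.univ.erase z, ∑ j, M (j, y) (j, y)) • τ

lemma chan_lin (τ : Matrix A A ℂ) (z : F) (c : ℂ) (M N : Matrix (A × F) (A × F) ℂ) :
    chan τ z (c • M + N) = c • chan τ z M + chan τ z N := by
  ext i j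
  have hs : (∑ y ∈ Finset.univ.erase z, ∑ j, (c * M (j, y) (j, y) + N (j, y) (j, y)))
      = c * (∑ y ∈ Finset.univ.erase z, ∑ j, M (j, y) (j, y))
        + (∑ y ∈ Finset.univ.erase z, ∑ j, N (j, y) (j, y)) := by
    simp only [Finset.sum_add_distrib, Finset.mul_sum]
  simp only [chan, Matrix.add_apply, Matrix.smul_apply, Matrix.submatrix_apply, smul_eq_mul, hs]
  ring

lemma chan_tp (τ : Matrix A A ℂ) (hτ : τ.trace = 1) (z : F)
    (M : Matrix (A × F) (A × F) ℂ) : (chan τ z M).trace = M.trace := by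
  simp only [chan, Matrix.trace_add, Matrix.trace_smul, hτ, smul_eq_mul, mul_one]
  rw [Matrix.trace]
  simp only [Matrix.diag_apply, Matrix.submatrix_apply]
  rw [Matrix.trace]
  rw [show ∑ i : A × F, M.diag i = ∑ y : F, ∑ j : A, M (j, y) (j, y) by
    rw [Fintype.sum_prod_type_right]; rfl]
  rw [← Finset.sum_erase_add _ _ (Finset.mem_univ z)]
  ring

lemma chan_cp (τ : Matrix A A ℂ) (hτ : τ.PosSemidef) (z : F) : IsCP (chan τ z) := by
  intro m _ M hM
  have key : cpExt (chan τ z) m M =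
      M.submatrix (fun p : m × A => (p.1, (p.2, z))) (fun p => (p.1, (p.2, z))) +
      ∑ y ∈ Finset.univ.erase z, ∑ j : A,
        (M.submatrix (fun p₁ : m => (p₁, (j, y))) (fun p₁ => (p₁, (j, y)))) ⊗ₖ τ := by
    ext p q
    simp only [cpExt, chan, Matrix.of_apply, Matrix.add_apply, Matrix.smul_apply,
      Matrix.submatrix_apply, Matrix.sum_apply, Matrix.kroneckerMap_apply,
      smul_eq_mul, Finset.sum_mul]
  rw [key]
  refine (hM.submatrix _).add (psd_sum _ _ fun y _ => psd_sum _ _ fun j _ => ?_)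
  exact kron_psd (hM.submatrix _) hτ

lemma chan_cptp (τ : Matrix A A ℂ) (hτ : IsDensity τ) (z : F) : IsCPTP (chan τ z) :=
  ⟨chan_lin τ z, chan_cp τ hτ.1 z, chan_tp τ hτ.2 z⟩

lemma chan_delta (τ : Matrix A A ℂ) (z : F) (R : Matrix A A ℂ)
    (P : Matrix F F ℂ) (hP : ∀ p q, P p q = if p = z ∧ q = z then 1 else 0) :
    chan τ z (R ⊗ₖ P) = R := by
  have hz : ∀ y ∈ Finset.univ.erase z, ∑ j, (R ⊗ₖ P) (j, y) (j, y) = 0 := by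
    intro y hy
    have : P y y = 0 := by
      rw [hP]
      simp [(Finset.mem_erase.mp hy).1]
    simp [Matrix.kroneckerMap_apply, this]
  unfold chan
  rw [Finset.sum_eq_zero hz, zero_smul, add_zero]
  ext i j
  simp [Matrix.submatrix_apply, Matrix.kroneckerMap_apply, hP]

lemma chan_unif (τ : Matrix A A ℂ) (z : F) (W : Matrix A A ℂ) (c : ℂ) :
    chan τ z (W ⊗ₖ (c • (1 : Matrix F F ℂ))) =
      c • W + (((Fintype.card F - 1 : ℕ) : ℂ) * c * W.trace) • τ := by
  have hz : ∀ y ∈ Finset.univ.erase z, ∑ j, (W ⊗ₖ (c • (1 : Matrix F F ℂ))) (j, y) (j, y)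
      = c * W.trace := by
    intro y _
    simp [Matrix.kroneckerMap_apply, Matrix.smul_apply, Matrix.one_apply, Matrix.trace,
      Finset.mul_sum, mul_comm]
  unfold chan
  rw [Finset.sum_congr rfl hz, Finset.sum_const, Finset.card_erase_of_mem (Finset.mem_univ z)]
  congr 1
  · ext i j
    simp [Matrix.submatrix_apply, Matrix.kroneckerMap_apply, Matrix.one_apply, mul_comm]
  · rw [Finset.card_univ, nsmul_eq_mul]
    ring_nf

/-! ### The infimum in `Dmax` is attained -/

variable {σ ω : Matrix A A ℂ}

def SS (ω σ : Matrix A A ℂ) : Set ℝ := {t : ℝ | ((t : ℂ) • σ - ω).PosSemidef}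

lemma SS_upward (hσ : σ.PosSemidef) {t t' : ℝ} (ht : t ∈ SS ω σ) (htt : t ≤ t') :
    t' ∈ SS ω σ := by
  have key : ((t' : ℂ) • σ - ω) = ((t : ℂ) • σ - ω) + (((t' - t : ℝ) : ℂ) • σ) := by
    push_cast
    rw [sub_smul]
    abel
  rw [SS, Set.mem_setOf_eq, key]
  exact ht.add (smul_psd (by linarith) hσ)

lemma SS_one_le (hσt : σ.trace = 1) (hωt : ω.trace = 1) {t : ℝ} (ht : t ∈ SS ω σ) : 1 ≤ t := by
  have h := trace_nonneg' ht
  rw [Matrix.trace_sub, Matrix.trace_smul, hσt, hωt, smul_eq_mul, mul_one] at h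
  have h2 : ((0 : ℝ) : ℂ) ≤ ((t - 1 : ℝ) : ℂ) := by push_cast; simpa using h
  have := (Complex.real_le_real).mp h2
  linarith

lemma sInf_mem_SS (hσ : σ.PosSemidef) (hσt : σ.trace = 1) (hωt : ω.trace = 1)
    (hne : (SS ω σ).Nonempty) : sInf (SS ω σ) ∈ SS ω σ := by
  classical
  set t₀ := sInf (SS ω σ) with ht₀
  have hbdd : BddBelow (SS ω σ) := ⟨1, fun t ht => SS_one_le hσt hωt ht⟩
  have hmem : ∀ ε : ℝ, 0 < ε → t₀ + ε ∈ SS ω σ := by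
    intro ε hε
    obtain ⟨a, ha, halt⟩ := (csInf_lt_iff hbdd hne).mp (by linarith : sInf (SS ω σ) < t₀ + ε)
    exact SS_upward hσ ha halt.le
  obtain ⟨s, hs⟩ := hne
  have herm : ((t₀ : ℂ) • σ - ω).IsHermitian := by
    have h1 : ((t₀ : ℂ) • σ).IsHermitian := by
      unfold Matrix.IsHermitian
      rw [Matrix.conjTranspose_smul, hσ.1.eq]
      simp [Complex.conj_ofReal]
    have h2 : ω.IsHermitian := by
      have hsH := hs.1
      have hσH : ((s : ℂ) • σ).IsHermitian := by
        unfold Matrix.IsHermitian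
        rw [Matrix.conjTranspose_smul, hσ.1.eq]
        simp [Complex.conj_ofReal]
      have : ω = (s : ℂ) • σ - ((s : ℂ) • σ - ω) := by abel
      rw [this]
      exact hσH.sub hsH
    exact h1.sub h2
  refine Matrix.PosSemidef.of_dotProduct_mulVec_nonneg herm fun x => ?_
  have hval : ∀ ε : ℝ, star x ⬝ᵥ (((t₀ : ℂ) • σ - ω) *ᵥ x)
      = star x ⬝ᵥ ((((t₀ + ε : ℝ) : ℂ) • σ - ω) *ᵥ x) - (ε : ℂ) * (star x ⬝ᵥ (σ *ᵥ x)) := by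
    intro ε
    have h : ((t₀ : ℂ) • σ - ω) = (((t₀ + ε : ℝ) : ℂ) • σ - ω) - (ε : ℂ) • σ := by
      push_cast
      rw [add_smul]
      abel
    rw [h, Matrix.sub_mulVec, dotProduct_sub, Matrix.smul_mulVec,
      dotProduct_smul, smul_eq_mul]
  set g : ℂ := star x ⬝ᵥ (σ *ᵥ x) with hg
  have hg0 : 0 ≤ g := hσ.dotProduct_mulVec_nonneg x
  have hg0im : g.im = 0 := by
    rw [Complex.nonneg_iff] at hg0
    exact hg0.2.symm
  rw [Complex.nonneg_iff]
  constructor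
  · by_contra hlt
    push_neg at hlt
    set r := (star x ⬝ᵥ (((t₀ : ℂ) • σ - ω) *ᵥ x)).re with hr
    have hrneg : r < 0 := hlt
    set ε : ℝ := (-r) / (g.re + 1) with hε
    have hgre0 : 0 ≤ g.re := ((Complex.nonneg_iff).mp hg0).1
    have hεpos : 0 < ε := div_pos (by linarith) (by linarith)
    have h1 := (hmem ε hεpos).dotProduct_mulVec_nonneg x
    rw [Complex.nonneg_iff] at h1
    have h2 := hval ε
    have h3 : r = (star x ⬝ᵥ ((((t₀ + ε : ℝ) : ℂ) • σ - ω) *ᵥ x)).re - ε * g.re := by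
      rw [hr, h2]
      simp [Complex.sub_re, Complex.mul_re, Complex.ofReal_re, Complex.ofReal_im]
    have h4 : ε * g.re < -r := by
      rw [hε]
      rw [div_mul_eq_mul_div, div_lt_iff₀ (by linarith : (0:ℝ) < g.re + 1)]
      nlinarith
    linarith [h1.1]
  · have h1 := (hmem 1 one_pos).dotProduct_mulVec_nonneg x
    rw [Complex.nonneg_iff] at h1
    have h1im : (star x ⬝ᵥ ((((t₀ + 1 : ℝ)) : ℂ) • σ - ω) *ᵥ x).im = 0 := h1.2.symm
    simp only [Complex.ofReal_add, Complex.ofReal_one] at h1im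
    rw [hval 1]
    simp [Complex.sub_im, Complex.mul_im, h1im, hg0im]

end Stmt7Aux

/-- **Triangle-type inequality.** For any quantum relative entropy `𝐃` and density
matrices `ρ, σ, ω`: `𝐃(ρ‖σ) ≤ 𝐃(ρ‖ω) + D_max(ω‖σ)` (in `ℝ≥0∞`, so the convention
`±∞ ≤ +∞` is automatic). -/
theorem stmt7
    (D : ∀ (m : Type) [Fintype m] [DecidableEq m],
      Matrix m m ℂ → Matrix m m ℂ → ℝ≥0∞)
    -- data-processing inequality under quantum channels
    (hdpi : ∀ (a b : Type) [Fintype a] [DecidableEq a] [Fintype b] [DecidableEq b]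
      (Φ : Matrix a a ℂ → Matrix b b ℂ), IsCPTP Φ →
      ∀ ρ σ : Matrix a a ℂ, IsDensity ρ → IsDensity σ → D b (Φ ρ) (Φ σ) ≤ D a ρ σ)
    -- additivity under tensor products
    (hadd : ∀ (a b : Type) [Fintype a] [DecidableEq a] [Fintype b] [DecidableEq b]
      (ρ₁ σ₁ : Matrix a a ℂ) (ρ₂ σ₂ : Matrix b b ℂ),
      IsDensity ρ₁ → IsDensity σ₁ → IsDensity ρ₂ → IsDensity σ₂ →
      D (a × b) (ρ₁ ⊗ₖ ρ₂) (σ₁ ⊗ₖ σ₂) = D a ρ₁ σ₁ + D b ρ₂ σ₂)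
    -- normalization
    (hnorm : D (Fin 2) (Matrix.diagonal ![1, 0]) (Matrix.diagonal ![1/2, 1/2]) = 1)
    (d : ℕ) (ρ σ ω : Matrix (Fin d) (Fin d) ℂ)
    (hρ : IsDensity ρ) (hσ : IsDensity σ) (hω : IsDensity ω) :
    D (Fin d) ρ σ ≤ D (Fin d) ρ ω + Dmax ω σ := by
  classical
  by_cases hex : ∃ t : ℝ, ((t : ℂ) • σ - ω).PosSemidef
  swap
  · rw [Dmax, if_neg hex, add_top]
    exact le_top
  have hne : (Stmt7Aux.SS ω σ).Nonempty := hex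
  set t₀ := sInf (Stmt7Aux.SS ω σ) with ht₀def
  have ht₀S : t₀ ∈ Stmt7Aux.SS ω σ := Stmt7Aux.sInf_mem_SS hσ.1 hσ.2 hω.2 hne
  have ht₀1 : 1 ≤ t₀ := Stmt7Aux.SS_one_le hσ.2 hω.2 ht₀S
  have hDmax : Dmax ω σ = ENNReal.ofReal (Real.logb 2 t₀) := by
    rw [Dmax, if_pos hex]
    rfl
  set c := Real.logb 2 t₀ with hcdef
  have hc0 : 0 ≤ c := Real.logb_nonneg one_lt_two ht₀1
  have ht₀pos : (0:ℝ) < t₀ := by linarith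
  have ht₀c : t₀ = (2:ℝ) ^ c := (Real.rpow_logb (by norm_num) (by norm_num) ht₀pos).symm
  -- the key inequality, one for each number of copies
  have key : ∀ n : ℕ, ((n+1 : ℕ) : ℝ≥0∞) * D (Fin d) ρ σ ≤
      ((n+1 : ℕ) : ℝ≥0∞) * D (Fin d) ρ ω
        + ((⌈((n+1 : ℕ) : ℝ) * c⌉₊ + 1 : ℕ) : ℝ≥0∞) := by
    intro n
    set k := ⌈((n+1 : ℕ) : ℝ) * c⌉₊ with hkdef
    set cc : ℝ := (2:ℝ)⁻¹ ^ (k+1) with hccdef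
    have hcc0 : 0 ≤ cc := by positivity
    have hcc_half : cc ≤ 2⁻¹ := by
      rw [hccdef]
      exact pow_le_of_le_one (by norm_num) (by norm_num) (by omega)
    have hcc1 : cc < 1 := by linarith
    -- 2^(k+1) dominates t₀^(n+1)
    have hpow : t₀ ^ (n+1) ≤ (2:ℝ) ^ (k+1) := by
      have h1 : t₀ ^ (n+1) = (2:ℝ) ^ (c * ((n+1:ℕ):ℝ)) := by
        rw [ht₀c, ← Real.rpow_natCast ((2:ℝ) ^ c) (n+1), ← Real.rpow_mul (by norm_num)]
      have h2 : ((2:ℝ) ^ (k+1) : ℝ) = (2:ℝ) ^ (((k+1:ℕ):ℝ)) := by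
        rw [Real.rpow_natCast]
      rw [h1, h2]
      apply Real.rpow_le_rpow_of_exponent_le one_le_two
      have hle := Nat.le_ceil (((n+1 : ℕ) : ℝ) * c)
      rw [← hkdef] at hle
      push_cast at hle ⊢
      linarith [mul_comm c ((n:ℝ)+1)]
    have hcc_le : cc ≤ (t₀⁻¹) ^ (n+1) := by
      rw [hccdef, inv_pow, inv_pow]
      exact inv_anti₀ (by positivity) hpow
    -- the matrix pw σ n - cc • pw ω n is PSD
    have h0 : (σ - ((t₀⁻¹ : ℝ) : ℂ) • ω).PosSemidef := by
      have h1 := Stmt7Aux.smul_psd (c := t₀⁻¹) (by positivity) ht₀S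
      have h2 : ((t₀⁻¹ : ℝ) : ℂ) • (((t₀ : ℝ) : ℂ) • σ - ω) = σ - ((t₀⁻¹ : ℝ) : ℂ) • ω := by
        rw [smul_sub, smul_smul]
        push_cast
        rw [inv_mul_cancel₀ (by exact_mod_cast ht₀pos.ne')]
        simp
      rwa [h2] at h1
    have hord := Stmt7Aux.pw_le (by positivity) hω.1 hσ.1 h0 n
    have hX : (Stmt7Aux.pw σ n - ((cc : ℝ) : ℂ) • Stmt7Aux.pw ω n).PosSemidef := by
      have hsplit : Stmt7Aux.pw σ n - ((cc : ℝ) : ℂ) • Stmt7Aux.pw ω n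
          = (Stmt7Aux.pw σ n - ((t₀⁻¹ ^ (n+1) : ℝ) : ℂ) • Stmt7Aux.pw ω n)
            + (((t₀⁻¹ ^ (n+1) - cc : ℝ) : ℂ) • Stmt7Aux.pw ω n) := by
        push_cast
        rw [sub_smul]
        abel
      rw [hsplit]
      exact hord.add (Stmt7Aux.smul_psd (by linarith) (Stmt7Aux.pw_density hω n).1)
    have hXtr : (Stmt7Aux.pw σ n - ((cc : ℝ) : ℂ) • Stmt7Aux.pw ω n).trace
        = ((1 - cc : ℝ) : ℂ) := by
      rw [Matrix.trace_sub, Matrix.trace_smul, (Stmt7Aux.pw_density hσ n).2,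
        (Stmt7Aux.pw_density hω n).2, smul_eq_mul, mul_one]
      push_cast
      ring
    set τ : Matrix (Stmt7Aux.It (Fin d) n) (Stmt7Aux.It (Fin d) n) ℂ :=
      (((1 - cc)⁻¹ : ℝ) : ℂ) • (Stmt7Aux.pw σ n - ((cc : ℝ) : ℂ) • Stmt7Aux.pw ω n) with hτdef
    have hτ : IsDensity τ := by
      constructor
      · exact Stmt7Aux.smul_psd (inv_nonneg.mpr (by linarith)) hX
      · rw [hτdef, Matrix.trace_smul, hXtr, smul_eq_mul, ← Complex.ofReal_mul,
          inv_mul_cancel₀ (ne_of_gt (by linarith : (0:ℝ) < 1 - cc)), Complex.ofReal_one]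
    set z := Stmt7Aux.zf k with hzdef
    set Φ := Stmt7Aux.chan τ z with hΦdef
    have hchan : IsCPTP Φ := Stmt7Aux.chan_cptp τ hτ z
    have hΦ1 : Φ (Stmt7Aux.pw ρ n ⊗ₖ Stmt7Aux.pw Stmt7Aux.matE k) = Stmt7Aux.pw ρ n :=
      Stmt7Aux.chan_delta τ z _ _ (Stmt7Aux.pwE_apply k)
    have hΦ2 : Φ (Stmt7Aux.pw ω n ⊗ₖ Stmt7Aux.pw Stmt7Aux.matU k) = Stmt7Aux.pw σ n := by
      rw [Stmt7Aux.pwU_eq k, hΦdef, Stmt7Aux.chan_unif τ z _ _, Stmt7Aux.itCard k,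
        (Stmt7Aux.pw_density hω n).2, hτdef, smul_smul, ← hccdef]
      have hc2 : (((2 ^ (k+1) - 1 : ℕ) : ℂ) * ((cc : ℝ) : ℂ) * 1) * (((1 - cc)⁻¹ : ℝ) : ℂ)
          = 1 := by
        have hr : ((2 ^ (k+1) - 1 : ℕ) : ℝ) * cc = 1 - cc := by
          rw [Nat.cast_sub Nat.one_le_two_pow, hccdef]
          push_cast
          rw [sub_mul, ← mul_pow]
          norm_num
        rw [mul_one, ← Complex.ofReal_natCast, ← Complex.ofReal_mul, ← Complex.ofReal_mul, hr,
          mul_inv_cancel₀ (ne_of_gt (by linarith)), Complex.ofReal_one]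
      rw [hc2, one_smul]
      abel
    -- data processing
    have hd1 : IsDensity (Stmt7Aux.pw ρ n ⊗ₖ Stmt7Aux.pw Stmt7Aux.matE k) :=
      Stmt7Aux.kron_density (Stmt7Aux.pw_density hρ n)
        (Stmt7Aux.pw_density Stmt7Aux.matE_density k)
    have hd2 : IsDensity (Stmt7Aux.pw ω n ⊗ₖ Stmt7Aux.pw Stmt7Aux.matU k) :=
      Stmt7Aux.kron_density (Stmt7Aux.pw_density hω n)
        (Stmt7Aux.pw_density Stmt7Aux.matU_density k)
    have hdp := hdpi _ _ Φ hchan _ _ hd1 hd2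
    rw [hΦ1, hΦ2] at hdp
    -- additivity for powers
    have hDpow : ∀ (α : Type) [Fintype α] [DecidableEq α] (P Q : Matrix α α ℂ),
        IsDensity P → IsDensity Q → ∀ j : ℕ,
        D (Stmt7Aux.It α j) (Stmt7Aux.pw P j) (Stmt7Aux.pw Q j)
          = ((j+1 : ℕ) : ℝ≥0∞) * D α P Q := by
      intro α _ _ P Q hP hQ j
      induction j with
      | zero => simp [Stmt7Aux.pw]
      | succ j ih =>
        have e : D (Stmt7Aux.It α (j+1)) (Stmt7Aux.pw P (j+1)) (Stmt7Aux.pw Q (j+1))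
            = D (α × Stmt7Aux.It α j) (P ⊗ₖ Stmt7Aux.pw P j) (Q ⊗ₖ Stmt7Aux.pw Q j) := rfl
        rw [e, hadd α (Stmt7Aux.It α j) P Q (Stmt7Aux.pw P j) (Stmt7Aux.pw Q j) hP hQ
          (Stmt7Aux.pw_density hP j) (Stmt7Aux.pw_density hQ j), ih]
        push_cast
        ring
    have hEU : D (Fin 2) Stmt7Aux.matE Stmt7Aux.matU = 1 := hnorm
    calc ((n+1 : ℕ) : ℝ≥0∞) * D (Fin d) ρ σ
        = D (Stmt7Aux.It (Fin d) n) (Stmt7Aux.pw ρ n) (Stmt7Aux.pw σ n) :=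
          (hDpow _ ρ σ hρ hσ n).symm
      _ ≤ D (Stmt7Aux.It (Fin d) n × Stmt7Aux.It (Fin 2) k)
            (Stmt7Aux.pw ρ n ⊗ₖ Stmt7Aux.pw Stmt7Aux.matE k)
            (Stmt7Aux.pw ω n ⊗ₖ Stmt7Aux.pw Stmt7Aux.matU k) := hdp
      _ = D (Stmt7Aux.It (Fin d) n) (Stmt7Aux.pw ρ n) (Stmt7Aux.pw ω n)
            + D (Stmt7Aux.It (Fin 2) k) (Stmt7Aux.pw Stmt7Aux.matE k)
              (Stmt7Aux.pw Stmt7Aux.matU k) := by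
          exact hadd _ _ _ _ _ _ (Stmt7Aux.pw_density hρ n) (Stmt7Aux.pw_density hω n)
            (Stmt7Aux.pw_density Stmt7Aux.matE_density k)
            (Stmt7Aux.pw_density Stmt7Aux.matU_density k)
      _ = ((n+1 : ℕ) : ℝ≥0∞) * D (Fin d) ρ ω + ((k+1 : ℕ) : ℝ≥0∞) := by
          rw [hDpow _ ρ ω hρ hω n, hDpow _ _ _ Stmt7Aux.matE_density Stmt7Aux.matU_density k,
            hEU, mul_one]
  -- conclude from the key inequality
  rw [hDmax]
  by_cases hb : D (Fin d) ρ ω = ⊤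
  · rw [hb, top_add]
    exact le_top
  have ha : D (Fin d) ρ σ ≠ ⊤ := by
    intro hA
    have h := key 0
    rw [hA] at h
    have : ((0+1 : ℕ) : ℝ≥0∞) * ⊤ = ⊤ := by simp
    rw [this, top_le_iff] at h
    exact (ENNReal.add_ne_top.mpr ⟨ENNReal.mul_ne_top (by simp) hb, ENNReal.natCast_ne_top _⟩) h
  set a' := (D (Fin d) ρ σ).toReal with ha'
  set b' := (D (Fin d) ρ ω).toReal with hb'
  have hreal : ∀ n : ℕ, ((n+1 : ℕ) : ℝ) * a' ≤ ((n+1 : ℕ) : ℝ) * b'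
      + ((⌈((n+1 : ℕ) : ℝ) * c⌉₊ + 1 : ℕ) : ℝ) := by
    intro n
    have h := key n
    have hfin1 : ((n+1 : ℕ) : ℝ≥0∞) * D (Fin d) ρ σ ≠ ⊤ :=
      ENNReal.mul_ne_top (by simp) ha
    have hfin2 : ((n+1 : ℕ) : ℝ≥0∞) * D (Fin d) ρ ω
        + ((⌈((n+1 : ℕ) : ℝ) * c⌉₊ + 1 : ℕ) : ℝ≥0∞) ≠ ⊤ :=
      ENNReal.add_ne_top.mpr ⟨ENNReal.mul_ne_top (by simp) hb, ENNReal.natCast_ne_top _⟩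
    have h2 := (ENNReal.toReal_le_toReal hfin1 hfin2).mpr h
    rw [ENNReal.toReal_mul, ENNReal.toReal_add (ENNReal.mul_ne_top (by simp) hb)
      (ENNReal.natCast_ne_top _), ENNReal.toReal_mul] at h2
    rw [ENNReal.toReal_natCast, ENNReal.toReal_natCast] at h2
    simpa using h2
  have hfin : a' ≤ b' + c := by
    by_contra hlt
    push_neg at hlt
    set δ := a' - (b' + c) with hδdef
    have hδ : 0 < δ := by rw [hδdef]; linarith
    obtain ⟨n, hn⟩ := exists_nat_gt (2 / δ)
    have h := hreal n
    have hceil : (⌈((n+1 : ℕ) : ℝ) * c⌉₊ : ℝ) < ((n+1 : ℕ) : ℝ) * c + 1 :=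
      Nat.ceil_lt_add_one (by positivity)
    have h2 : 2 < (n : ℝ) * δ := (div_lt_iff₀ hδ).mp hn
    have h3 : ((n+1 : ℕ) : ℝ) * δ ≤ 2 := by
      push_cast at h hceil ⊢
      nlinarith
    have h4 : (n : ℝ) ≤ ((n+1 : ℕ) : ℝ) := by push_cast; linarith
    nlinarith
  calc D (Fin d) ρ σ = ENNReal.ofReal a' := (ENNReal.ofReal_toReal ha).symm
    _ ≤ ENNReal.ofReal (b' + c) := ENNReal.ofReal_le_ofReal hfin
    _ = ENNReal.ofReal b' + ENNReal.ofReal c :=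
        ENNReal.ofReal_add ENNReal.toReal_nonneg hc0
    _ = D (Fin d) ρ ω + ENNReal.ofReal c := by rw [hb', ENNReal.ofReal_toReal hb]
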